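/- Let v ≥ 1 and let T be a v²×4 array with T(2,3,4) a VOA(U_{2,3}, v). Suppose the uniform distribution (X1,X2,X3,X4) on the rows of T has entropy function a·r1 + b·r2, where r1 is the rank function of Û^1_{2,5} and r2 that of U^{234}_{2,3}. Let A_i (resp. B_i) be the set of values of column 2 (resp. column 3) co-occurring with value i of column 1. Then for every i: |A_i| = |B_i|, the subarray of T(2,3,4) induced by A_i and B_i is a VOA(U_{2,3}, |A_i|), the sets A_i × B_i partition the square of the alphabet, and a = (1/2)·H(|A_i|²/v² : i). -/

import Mathlib

open Finset
open scoped BigOperators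
noncomputable section

/-- Probability, under the pmf `p` on the rows, that the columns indexed by `A` of the
array `T` agree with their values on row `r`. -/
def colProb {R : Type*} [Fintype R] (p : R → ℝ) (T : R → Fin 4 → ℕ)
    (A : Finset (Fin 4)) (r : R) : ℝ :=
  ∑ s, if ∀ i ∈ A, T s i = T r i then p s else 0

/-- The Shannon entropy `H(X_A)` of the columns of `T` indexed by `A`, where the rows
carry the pmf `p`. -/
def colEntropy {R : Type*} [Fintype R] (p : R → ℝ) (T : R → Fin 4 → ℕ)
    (A : Finset (Fin 4)) : ℝ :=
  -∑ r, p r * Real.log (colProb p T A r)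

/-- `T` is a `VOA(U_{2,3}, v)`: a `v² × 3` array over an alphabet of size `v` in which
every ordered pair of symbols occurs exactly once in each pair of distinct columns
(a Latin square of order `v` in orthogonal-array form). -/
def IsVOA23 (v : ℕ) (T : Fin (v ^ 2) → Fin 3 → Fin v) : Prop :=
  ∀ j k : Fin 3, j ≠ k → ∀ a b : Fin v,
    (Finset.univ.filter (fun r => T r j = a ∧ T r k = b)).card = 1

/-- Combine a first column `c1` (alphabet `Fin t`) with a `v²×3` array `c` into a
`v²×4` array of naturals (column `0` is `c1`, columns `1,2,3` are those of `c`). -/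
def mkT {v t : ℕ} (c1 : Fin (v ^ 2) → Fin t) (c : Fin (v ^ 2) → Fin 3 → Fin v) :
    Fin (v ^ 2) → Fin 4 → ℕ := fun r i =>
  if i = 0 then (c1 r : ℕ)
  else (c r ⟨(i : ℕ) - 1, by have h := i.isLt; omega⟩ : ℕ)

/-- Rank function of `Û^1_{2,5}` (element `1` is index `0`). -/
def rU25hat1 (A : Finset (Fin 4)) : ℝ :=
  if A = {0} then 2 else min 2 (A.card : ℝ)

/-- Rank function of the wheel matroid `W^{12}_2`: elements `1,2` (indices `0,1`)
are parallel, and each of them forms a `U_{2,3}` with elements `3,4`. -/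
def rW12 (A : Finset (Fin 4)) : ℝ :=
  if A = ∅ then 0 else if A ⊆ ({0, 1} : Finset (Fin 4)) then 1 else min 2 (A.card : ℝ)

/-- Rank function of the wheel matroid `W^{13}_2`: elements `1,3` (indices `0,2`)
are parallel. -/
def rW13 (A : Finset (Fin 4)) : ℝ :=
  if A = ∅ then 0 else if A ⊆ ({0, 2} : Finset (Fin 4)) then 1 else min 2 (A.card : ℝ)

/-- Rank function of `U^{234}_{2,3}`: a `U_{2,3}` on `{2,3,4}` (indices `1,2,3`) with
element `1` (index `0`) a loop. -/
def rU23_234 (A : Finset (Fin 4)) : ℝ :=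
  min 2 ((A ∩ ({1, 2, 3} : Finset (Fin 4))).card : ℝ)

/-- The set of values of column `j` of the `VOA` part co-occurring with value `i`
in column `1`. -/
def valSet {v t : ℕ} (c1 : Fin (v ^ 2) → Fin t) (c : Fin (v ^ 2) → Fin 3 → Fin v)
    (j : Fin 3) (i : Fin t) : Finset (Fin v) :=
  (Finset.univ.filter (fun r => c1 r = i)).image (fun r => c r j)

variable {R I V : Type*} [Fintype R] [DecidableEq I] [DecidableEq V]

/-- fiber count bound: within a fiber of z, sum of products of sub-fiber counts. -/
lemma fiber_prod_le (z : R → I) (u w : R → V)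
    (huw : ∀ r s : R, u r = u s → w r = w s → r = s) (i : I) :
    ∑ r ∈ univ.filter (fun s => z s = i),
      ((univ.filter (fun s => z s = i ∧ u s = u r)).card *
       (univ.filter (fun s => z s = i ∧ w s = w r)).card)
      ≤ (univ.filter (fun s => z s = i)).card ^ 2 := by
  classical
  set G := univ.filter (fun s => z s = i) with hG
  have hrw : ∀ x, (univ.filter (fun s => z s = i ∧ u s = x)) = G.filter (fun s => u s = x) := by
    intro x; ext s; simp [hG, and_comm]
  have hrw' : ∀ y, (univ.filter (fun s => z s = i ∧ w s = y)) = G.filter (fun s => w s = y) := by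
    intro x; ext s; simp [hG, and_comm]
  have h1 : ∑ r ∈ G, ((G.filter (fun s => u s = u r)).card * (G.filter (fun s => w s = w r)).card)
      = ∑ p ∈ G.image (fun r => (u r, w r)),
          ((G.filter (fun s => u s = p.1)).card * (G.filter (fun s => w s = p.2)).card) := by
    rw [Finset.sum_image]
    intro x _ y _ h
    exact huw x y (congrArg Prod.fst h) (congrArg Prod.snd h)
  have h2 : G.image (fun r => (u r, w r)) ⊆ (G.image u) ×ˢ (G.image w) := by
    intro p hp
    simp only [mem_image] at hp
    obtain ⟨r, hr, rfl⟩ := hp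
    simp [Finset.mem_product, mem_image]
    exact ⟨⟨r, hr, rfl⟩, ⟨r, hr, rfl⟩⟩
  have h3 : ∑ p ∈ G.image (fun r => (u r, w r)),
          ((G.filter (fun s => u s = p.1)).card * (G.filter (fun s => w s = p.2)).card)
      ≤ ∑ p ∈ (G.image u) ×ˢ (G.image w),
          ((G.filter (fun s => u s = p.1)).card * (G.filter (fun s => w s = p.2)).card) :=
    Finset.sum_le_sum_of_subset h2
  have h4 : ∑ p ∈ (G.image u) ×ˢ (G.image w),
          ((G.filter (fun s => u s = p.1)).card * (G.filter (fun s => w s = p.2)).card)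
      = G.card * G.card := by
    rw [Finset.sum_product]
    have hu : ∑ x ∈ G.image u, (G.filter (fun s => u s = x)).card = G.card :=
      (Finset.card_eq_sum_card_fiberwise (fun x hx => Finset.mem_image_of_mem u hx)).symm
    have hw : ∑ y ∈ G.image w, (G.filter (fun s => w s = y)).card = G.card :=
      (Finset.card_eq_sum_card_fiberwise (fun x hx => Finset.mem_image_of_mem w hx)).symm
    calc ∑ x ∈ G.image u, ∑ y ∈ G.image w,
          ((G.filter (fun s => u s = x)).card * (G.filter (fun s => w s = y)).card)
        = ∑ x ∈ G.image u, (G.filter (fun s => u s = x)).card *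
            ∑ y ∈ G.image w, (G.filter (fun s => w s = y)).card := by
          simp [Finset.mul_sum]
      _ = G.card * G.card := by rw [← Finset.sum_mul, hu, hw]
  simp only [hrw, hrw']
  calc _ = _ := h1
    _ ≤ _ := h3
    _ = G.card * G.card := h4
    _ = G.card ^ 2 := (sq _).symm

lemma keyA (z : R → I) (u w : R → V)
    (huw : ∀ r s : R, u r = u s → w r = w s → r = s)
    (hsum : ∑ r : R, (Real.log (univ.filter (fun s => z s = z r)).card
        - Real.log (univ.filter (fun s => z s = z r ∧ u s = u r)).card
        - Real.log (univ.filter (fun s => z s = z r ∧ w s = w r)).card) = 0) :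
    ∀ r : R, (univ.filter (fun s => z s = z r ∧ u s = u r)).card *
        (univ.filter (fun s => z s = z r ∧ w s = w r)).card
      = (univ.filter (fun s => z s = z r)).card := by
  classical
  set n : R → ℕ := fun r => (univ.filter (fun s => z s = z r)).card with hn
  set m : R → ℕ := fun r => (univ.filter (fun s => z s = z r ∧ u s = u r)).card with hm
  set l : R → ℕ := fun r => (univ.filter (fun s => z s = z r ∧ w s = w r)).card with hl
  have hmpos : ∀ r, 0 < m r := fun r =>
    Finset.card_pos.2 ⟨r, by simp [hm]⟩
  have hlpos : ∀ r, 0 < l r := fun r =>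
    Finset.card_pos.2 ⟨r, by simp [hl]⟩
  have hnpos : ∀ r, 0 < n r := fun r =>
    Finset.card_pos.2 ⟨r, by simp [hn]⟩
  set f : R → ℝ := fun r => Real.log (n r) - Real.log (m r) - Real.log (l r) with hf
  set g : R → ℝ := fun r => 1 - (m r * l r : ℝ) / (n r) with hg
  have hmr : ∀ r, (0:ℝ) < (m r : ℝ) := fun r => by exact_mod_cast hmpos r
  have hlr : ∀ r, (0:ℝ) < (l r : ℝ) := fun r => by exact_mod_cast hlpos r
  have hnr : ∀ r, (0:ℝ) < (n r : ℝ) := fun r => by exact_mod_cast hnpos r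
  have hlog : ∀ r, Real.log ((m r * l r : ℝ) / (n r))
      = Real.log (m r) + Real.log (l r) - Real.log (n r) := by
    intro r
    rw [Real.log_div (by nlinarith [hmr r, hlr r]) (by nlinarith [hnr r]),
      Real.log_mul (by nlinarith [hmr r]) (by nlinarith [hlr r])]
  have hxpos : ∀ r, (0:ℝ) < (m r * l r : ℝ) / (n r) := fun r =>
    div_pos (by nlinarith [hmr r, hlr r]) (hnr r)
  have hfg : ∀ r, g r ≤ f r := by
    intro r
    have := Real.log_le_sub_one_of_pos (hxpos r)
    rw [hlog r] at this
    simp only [hf, hg]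
    linarith
  -- sum of g is nonnegative
  have hsumg : 0 ≤ ∑ r : R, g r := by
    have key : ∑ r : R, (m r * l r : ℝ) / (n r) ≤ (Fintype.card R : ℝ) := by
      have hfib := Finset.sum_fiberwise_of_maps_to (t := univ.image z)
        (fun r (_ : r ∈ univ) => Finset.mem_image_of_mem z (Finset.mem_univ r))
        (fun r => (m r * l r : ℝ) / (n r))
      rw [← hfib]
      have hcard : (Fintype.card R : ℝ) = ∑ i ∈ univ.image z,
          ((univ.filter (fun s => z s = i)).card : ℝ) := by
        rw [← Nat.cast_sum]
        norm_cast
        exact Finset.card_eq_sum_card_fiberwise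
          (fun x _ => Finset.mem_image_of_mem z (Finset.mem_univ x))
      rw [hcard]
      apply Finset.sum_le_sum
      intro i hi
      set G := univ.filter (fun s => z s = i) with hG
      have hGpos : 0 < G.card := by
        simp only [mem_image] at hi
        obtain ⟨r, _, rfl⟩ := hi
        exact Finset.card_pos.2 ⟨r, by simp [hG]⟩
      have hmem : ∀ r ∈ G, z r = i := by intro r hr; simpa [hG] using hr
      have heq : ∀ r ∈ G, (m r * l r : ℝ) / (n r) = (m r * l r : ℝ) / (G.card : ℝ) := by
        intro r hr
        have : n r = G.card := by
          simp only [hn, hG, hmem r hr]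
        rw [this]
      rw [Finset.sum_congr rfl heq, ← Finset.sum_div]
      rw [div_le_iff₀ (by positivity)]
      have hb := fiber_prod_le z u w huw i
      have : ∑ r ∈ G, (m r * l r : ℝ) ≤ (G.card ^ 2 : ℕ) := by
        push_cast
        have : ∑ r ∈ G, (m r * l r : ℝ) = ((∑ r ∈ G, (m r * l r) : ℕ) : ℝ) := by push_cast; ring_nf
        rw [this]
        have h2 : (∑ r ∈ G, m r * l r) ≤ G.card ^ 2 := by
          calc (∑ r ∈ G, m r * l r)
              = ∑ r ∈ G, ((univ.filter (fun s => z s = i ∧ u s = u r)).card *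
                 (univ.filter (fun s => z s = i ∧ w s = w r)).card) := by
                apply Finset.sum_congr rfl
                intro r hr
                simp only [hm, hl, hmem r hr]
            _ ≤ G.card ^ 2 := hb
        exact_mod_cast h2
      calc ∑ r ∈ G, (m r * l r : ℝ) ≤ ((G.card ^2 : ℕ) : ℝ) := this
        _ = (G.card : ℝ) * (G.card : ℝ) := by push_cast; ring
    have : ∑ r : R, g r = (Fintype.card R : ℝ) - ∑ r : R, (m r * l r : ℝ) / (n r) := by
      simp [hg, Finset.sum_sub_distrib]
    rw [this]; linarith
  -- pointwise equality
  have hpt : ∀ r : R, f r = g r := by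
    have h0 : ∑ r : R, (f r - g r) = 0 := by
      have h1 : ∑ r : R, (f r - g r) = ∑ r : R, f r - ∑ r : R, g r := Finset.sum_sub_distrib _ _
      have h2 : ∑ r : R, f r = 0 := hsum
      have h3 : ∑ r : R, (f r - g r) ≥ 0 := Finset.sum_nonneg (fun r _ => by linarith [hfg r])
      linarith
    intro r
    have := (Finset.sum_eq_zero_iff_of_nonneg (fun r _ => by linarith [hfg r])).1 h0 r (mem_univ r)
    linarith
  intro r
  by_contra hne
  have hcast : ((m r : ℝ) * (l r : ℝ)) ≠ ((n r : ℝ)) := by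
    intro h
    apply hne
    exact_mod_cast h
  have hne' : (m r * l r : ℝ) / (n r) ≠ 1 := by
    intro h
    exact hcast ((div_eq_one_iff_eq (ne_of_gt (hnr r))).1 h)
  have hstrict := Real.log_lt_sub_one_of_pos (hxpos r) hne'
  rw [hlog r] at hstrict
  have := hpt r
  simp only [hf, hg] at this
  linarith

lemma keyB (z : R → I) (u w : R → V)
    (huw : ∀ r s : R, u r = u s → w r = w s → r = s)
    (hkey : ∀ r : R, (univ.filter (fun s => z s = z r ∧ u s = u r)).card *
        (univ.filter (fun s => z s = z r ∧ w s = w r)).card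
      = (univ.filter (fun s => z s = z r)).card) :
    ∀ r s : R, z r = z s → ∃ q : R, z q = z r ∧ u q = u r ∧ w q = w s := by
  classical
  intro r s hzs
  set i := z r with hi
  set G := univ.filter (fun q => z q = i) with hG
  have hrG : r ∈ G := by simp [hG, hi]
  have hsG : s ∈ G := mem_filter.2 ⟨mem_univ s, hzs.symm⟩
  set M : V → ℕ := fun x => (G.filter (fun q => u q = x)).card with hM
  set L : V → ℕ := fun y => (G.filter (fun q => w q = y)).card with hL
  have hkey' : ∀ q ∈ G, M (u q) * L (w q) = G.card := by
    intro q hq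
    have hzq : z q = i := by simpa [hG] using hq
    have := hkey q
    have e1 : (univ.filter (fun p => z p = z q ∧ u p = u q)) = G.filter (fun p => u p = u q) := by
      ext p; simp [hG, hzq, and_comm]
    have e2 : (univ.filter (fun p => z p = z q ∧ w p = w q)) = G.filter (fun p => w p = w q) := by
      ext p; simp [hG, hzq, and_comm]
    have e3 : (univ.filter (fun p => z p = z q)) = G := by
      ext p; simp [hG, hzq]
    rw [e1, e2, e3] at this
    exact this
  set Y : Finset V := (G.filter (fun q => u q = u r)).image w with hY
  have hYcard : Y.card = M (u r) := by
    rw [hY, Finset.card_image_of_injOn]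
    intro p hp q hq hpq
    exact huw p q ((mem_filter.1 hp).2.trans (mem_filter.1 hq).2.symm) hpq
  have hsum1 : M (u r) * (∑ y ∈ Y, L y) = M (u r) * G.card := by
    rw [Finset.mul_sum]
    have : ∀ y ∈ Y, M (u r) * L y = G.card := by
      intro y hy
      simp only [hY, mem_image, mem_filter] at hy
      obtain ⟨q, ⟨hqG, hqu⟩, rfl⟩ := hy
      have hk := hkey' q hqG
      rw [hqu] at hk
      exact hk
    rw [Finset.sum_congr rfl this, Finset.sum_const, smul_eq_mul, hYcard, mul_comm]
  have hMpos : 0 < M (u r) := Finset.card_pos.2 ⟨r, by simp [hM, hrG]⟩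
  have hsumY : ∑ y ∈ Y, L y = G.card := Nat.eq_of_mul_eq_mul_left hMpos hsum1
  have hsumB : ∑ y ∈ G.image w, L y = G.card :=
    (Finset.card_eq_sum_card_fiberwise (fun q hq => Finset.mem_image_of_mem w hq)).symm
  have hYB : Y ⊆ G.image w := by
    intro y hy
    simp only [hY, mem_image, mem_filter] at hy ⊢
    obtain ⟨q, hq, rfl⟩ := hy
    exact ⟨q, hq.1, rfl⟩
  by_cases hws : w s ∈ Y
  · simp only [hY, mem_image, mem_filter] at hws
    obtain ⟨q, ⟨hqG, hqu⟩, hqw⟩ := hws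
    have hzq : z q = i := by simpa [hG] using hqG
    exact ⟨q, hzq, hqu, hqw⟩
  · exfalso
    have hsub : Y ⊆ (G.image w).erase (w s) := by
      intro y hy
      rw [Finset.mem_erase]
      exact ⟨fun h => hws (h ▸ hy), hYB hy⟩
    have h1 : ∑ y ∈ Y, L y ≤ ∑ y ∈ (G.image w).erase (w s), L y :=
      Finset.sum_le_sum_of_subset hsub
    have hwsB : w s ∈ G.image w := Finset.mem_image_of_mem w hsG
    have h2 : ∑ y ∈ (G.image w).erase (w s), L y = G.card - L (w s) := by
      have := Finset.add_sum_erase _ L hwsB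
      omega
    have hLpos : 0 < L (w s) := Finset.card_pos.2 ⟨s, by simp [hL, hsG]⟩
    have hGpos : 0 < G.card := Finset.card_pos.2 ⟨r, hrG⟩
    omega

lemma keyC (z : R → I) (u w : R → V)
    (huw : ∀ r s : R, u r = u s → w r = w s → r = s)
    (hkey : ∀ r : R, (univ.filter (fun s => z s = z r ∧ u s = u r)).card *
        (univ.filter (fun s => z s = z r ∧ w s = w r)).card
      = (univ.filter (fun s => z s = z r)).card) (r : R) :
    ((univ.filter (fun s => z s = z r)).image u).card *
      ((univ.filter (fun s => z s = z r)).image w).card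
      = (univ.filter (fun s => z s = z r)).card := by
  classical
  set G := univ.filter (fun s => z s = z r) with hG
  have himg : G.image (fun q => (u q, w q)) = (G.image u) ×ˢ (G.image w) := by
    apply Finset.Subset.antisymm
    · intro p hp
      simp only [mem_image] at hp
      obtain ⟨q, hq, rfl⟩ := hp
      simp only [Finset.mem_product]
      exact ⟨Finset.mem_image_of_mem u hq, Finset.mem_image_of_mem w hq⟩
    · intro p hp
      simp only [Finset.mem_product, mem_image] at hp
      obtain ⟨⟨q1, hq1, hp1⟩, ⟨q2, hq2, hp2⟩⟩ := hp
      have hz1 : z q1 = z r := by simpa [hG] using hq1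
      have hz2 : z q2 = z r := by simpa [hG] using hq2
      obtain ⟨q, hqz, hqu, hqw⟩ := keyB z u w huw hkey q1 q2 (hz1.trans hz2.symm)
      simp only [mem_image]
      exact ⟨q, by simp [hG, hqz.trans hz1], by rw [hqu, hp1, hqw, hp2]⟩
  have hcardimg : (G.image (fun q => (u q, w q))).card = G.card := by
    apply Finset.card_image_of_injOn
    intro p hp q hq hpq
    exact huw p q (congrArg Prod.fst hpq) (congrArg Prod.snd hpq)
  rw [← Finset.card_product, ← himg, hcardimg]

lemma colProb_count {R : Type*} [Fintype R] (N : ℕ) (T : R → Fin 4 → ℕ)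
    (A : Finset (Fin 4)) (r : R) :
    colProb (fun _ => ((N : ℕ) : ℝ)⁻¹) T A r
      = ((univ.filter (fun s => ∀ i ∈ A, T s i = T r i)).card : ℝ) * ((N : ℕ) : ℝ)⁻¹ := by
  classical
  rw [colProb, ← Finset.sum_filter, Finset.sum_const, nsmul_eq_mul]

lemma colEntropy_count {R : Type*} [Fintype R] (N : ℕ) (T : R → Fin 4 → ℕ)
    (A : Finset (Fin 4)) :
    colEntropy (fun _ => ((N : ℕ) : ℝ)⁻¹) T A
      = -∑ r, ((N : ℕ) : ℝ)⁻¹ *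
          Real.log (((univ.filter (fun s => ∀ i ∈ A, T s i = T r i)).card : ℝ) * ((N : ℕ) : ℝ)⁻¹) := by
  rw [colEntropy]
  congr 1
  exact Finset.sum_congr rfl (fun r _ => by rw [colProb_count])

lemma pair_unique {v : ℕ} {N : ℕ} {c : Fin N → Fin 3 → Fin v} {j k : Fin 3}
    (hVOA1 : ∀ a b : Fin v, (univ.filter (fun r => c r j = a ∧ c r k = b)).card = 1) :
    ∀ r s : Fin N, c r j = c s j → c r k = c s k → r = s := by
  intro r s h1 h2
  have hc := hVOA1 (c r j) (c r k)
  obtain ⟨a, ha⟩ := Finset.card_eq_one.1 hc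
  have hr : r ∈ univ.filter (fun q => c q j = c r j ∧ c q k = c r k) := by simp
  have hs : s ∈ univ.filter (fun q => c q j = c r j ∧ c q k = c r k) := by
    simp [← h1, ← h2]
  rw [ha, Finset.mem_singleton] at hr hs
  rw [hr, hs]

lemma combo {v t : ℕ} (hv : 0 < v)
    (c1 : Fin (v ^ 2) → Fin t) (c : Fin (v ^ 2) → Fin 3 → Fin v)
    (T : Fin (v ^ 2) → Fin 4 → ℕ)
    (hT0 : ∀ s, T s 0 = (c1 s : ℕ))
    (j k : Fin 3) (jj kk : Fin 4)
    (hTj : ∀ s, T s jj = (c s j : ℕ)) (hTk : ∀ s, T s kk = (c s k : ℕ))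
    (hVOA1 : ∀ a b : Fin v, (univ.filter (fun r => c r j = a ∧ c r k = b)).card = 1)
    (hcombo : colEntropy (fun _ => ((v ^ 2 : ℕ) : ℝ)⁻¹) T {0, jj}
        + colEntropy (fun _ => ((v ^ 2 : ℕ) : ℝ)⁻¹) T {0, kk}
        - colEntropy (fun _ => ((v ^ 2 : ℕ) : ℝ)⁻¹) T {0}
        - colEntropy (fun _ => ((v ^ 2 : ℕ) : ℝ)⁻¹) T {0, jj, kk} = 0) :
    ∑ r : Fin (v ^ 2),
      (Real.log ((univ.filter (fun s => c1 s = c1 r)).card : ℝ)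
        - Real.log ((univ.filter (fun s => c1 s = c1 r ∧ c s j = c r j)).card : ℝ)
        - Real.log ((univ.filter (fun s => c1 s = c1 r ∧ c s k = c r k)).card : ℝ)) = 0 := by
  classical
  have hN : (0:ℝ) < ((v ^ 2 : ℕ) : ℝ) := by positivity
  set n : Fin (v ^ 2) → ℕ := fun r => (univ.filter (fun s => c1 s = c1 r)).card with hn
  set m : Fin (v ^ 2) → ℕ := fun r => (univ.filter (fun s => c1 s = c1 r ∧ c s j = c r j)).card with hm
  set l : Fin (v ^ 2) → ℕ := fun r => (univ.filter (fun s => c1 s = c1 r ∧ c s k = c r k)).card with hl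
  -- predicate identifications
  have hfm : ∀ r : Fin (v ^ 2), (univ.filter (fun s => ∀ i ∈ ({0, jj} : Finset (Fin 4)), T s i = T r i))
      = univ.filter (fun s => c1 s = c1 r ∧ c s j = c r j) := by
    intro r; apply Finset.filter_congr; intro s _
    simp only [Finset.mem_insert, Finset.mem_singleton, forall_eq_or_imp, forall_eq,
      hT0, hTj, eq_iff_iff]
    exact and_congr Fin.val_inj Fin.val_inj
  have hfl : ∀ r : Fin (v ^ 2), (univ.filter (fun s => ∀ i ∈ ({0, kk} : Finset (Fin 4)), T s i = T r i))
      = univ.filter (fun s => c1 s = c1 r ∧ c s k = c r k) := by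
    intro r; apply Finset.filter_congr; intro s _
    simp only [Finset.mem_insert, Finset.mem_singleton, forall_eq_or_imp, forall_eq,
      hT0, hTk, eq_iff_iff]
    exact and_congr Fin.val_inj Fin.val_inj
  have hfn : ∀ r : Fin (v ^ 2), (univ.filter (fun s => ∀ i ∈ ({0} : Finset (Fin 4)), T s i = T r i))
      = univ.filter (fun s => c1 s = c1 r) := by
    intro r; apply Finset.filter_congr; intro s _
    simp only [Finset.mem_singleton, forall_eq, hT0, eq_iff_iff]
    exact Fin.val_inj
  have hf3 : ∀ r : Fin (v ^ 2),
      (univ.filter (fun s => ∀ i ∈ ({0, jj, kk} : Finset (Fin 4)), T s i = T r i)).card = 1 := by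
    intro r
    have hsub : (univ.filter (fun s => ∀ i ∈ ({0, jj, kk} : Finset (Fin 4)), T s i = T r i))
        ⊆ univ.filter (fun s : Fin (v ^ 2) => c s j = c r j ∧ c s k = c r k) := by
      intro s hs
      simp only [Finset.mem_filter, Finset.mem_insert, Finset.mem_singleton] at hs
      have h1 : T s jj = T r jj := hs.2 jj (by simp)
      have h2 : T s kk = T r kk := hs.2 kk (by simp)
      rw [hTj, hTj] at h1; rw [hTk, hTk] at h2
      exact Finset.mem_filter.2 ⟨Finset.mem_univ s, Fin.val_inj.1 h1, Fin.val_inj.1 h2⟩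
    have hle : (univ.filter (fun s => ∀ i ∈ ({0, jj, kk} : Finset (Fin 4)), T s i = T r i)).card
        ≤ 1 := by
      calc _ ≤ (univ.filter (fun s : Fin (v ^ 2) => c s j = c r j ∧ c s k = c r k)).card :=
            Finset.card_le_card hsub
        _ = 1 := hVOA1 (c r j) (c r k)
    have hmem : r ∈ (univ.filter (fun s => ∀ i ∈ ({0, jj, kk} : Finset (Fin 4)), T s i = T r i)) := by
      simp
    have hpos := Finset.card_pos.2 ⟨r, hmem⟩
    omega
  -- positivity of the counts
  have hmpos : ∀ r, 0 < m r := fun r => Finset.card_pos.2 ⟨r, by simp [hm]⟩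
  have hlpos : ∀ r, 0 < l r := fun r => Finset.card_pos.2 ⟨r, by simp [hl]⟩
  have hnpos : ∀ r, 0 < n r := fun r => Finset.card_pos.2 ⟨r, by simp [hn]⟩
  have hlogmul : ∀ x : ℕ, 0 < x → Real.log ((x : ℝ) * ((v ^ 2 : ℕ) : ℝ)⁻¹)
      = Real.log (x:ℝ) - Real.log ((v ^ 2 : ℕ) : ℝ) := by
    intro x hx
    have hx' : (0:ℝ) < (x:ℝ) := by exact_mod_cast hx
    rw [Real.log_mul hx'.ne' (by positivity), Real.log_inv]
    ring
  -- rewrite the four entropies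
  rw [colEntropy_count, colEntropy_count, colEntropy_count, colEntropy_count] at hcombo
  have hstep : ∀ r : Fin (v ^ 2),
      ((v ^ 2:ℕ):ℝ)⁻¹ * Real.log (((univ.filter (fun s => ∀ i ∈ ({0, jj} : Finset (Fin 4)), T s i = T r i)).card : ℝ) * ((v ^ 2:ℕ):ℝ)⁻¹)
      + ((v ^ 2:ℕ):ℝ)⁻¹ * Real.log (((univ.filter (fun s => ∀ i ∈ ({0, kk} : Finset (Fin 4)), T s i = T r i)).card : ℝ) * ((v ^ 2:ℕ):ℝ)⁻¹)
      - ((v ^ 2:ℕ):ℝ)⁻¹ * Real.log (((univ.filter (fun s => ∀ i ∈ ({0} : Finset (Fin 4)), T s i = T r i)).card : ℝ) * ((v ^ 2:ℕ):ℝ)⁻¹)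
      - ((v ^ 2:ℕ):ℝ)⁻¹ * Real.log (((univ.filter (fun s => ∀ i ∈ ({0, jj, kk} : Finset (Fin 4)), T s i = T r i)).card : ℝ) * ((v ^ 2:ℕ):ℝ)⁻¹)
      = -(((v ^ 2:ℕ):ℝ)⁻¹ * (Real.log (n r) - Real.log (m r) - Real.log (l r))) := by
    intro r
    rw [hfm r, hfl r, hfn r, hf3 r]
    rw [hlogmul _ (hmpos r), hlogmul _ (hlpos r), hlogmul _ (hnpos r), hlogmul 1 one_pos]
    simp only [Nat.cast_one, Real.log_one]
    ring
  have hzero : ∑ r : Fin (v ^ 2), -(((v ^ 2:ℕ):ℝ)⁻¹ * (Real.log (n r) - Real.log (m r) - Real.log (l r))) = 0 := by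
    rw [← Finset.sum_congr rfl (fun r _ => hstep r)]
    rw [Finset.sum_sub_distrib, Finset.sum_sub_distrib, Finset.sum_add_distrib]
    linarith [hcombo]
  have hzero2 : ((v ^ 2:ℕ):ℝ)⁻¹ * ∑ r : Fin (v ^ 2), (Real.log (n r) - Real.log (m r) - Real.log (l r)) = 0 := by
    rw [Finset.mul_sum]
    rw [Finset.sum_neg_distrib] at hzero
    linarith [hzero]
  have hNne : ((v ^ 2:ℕ):ℝ)⁻¹ ≠ 0 := by positivity
  rcases mul_eq_zero.1 hzero2 with h | h
  · exact absurd h hNne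
  · exact h


lemma filter_card_one {R : Type*} [Fintype R] {P : R → Prop} [DecidablePred P]
    {S : Finset R} {q : R} (hq : q ∈ S) (hPq : P q)
    (h1 : (univ.filter P).card = 1) : (S.filter P).card = 1 := by
  have hsub : S.filter P ⊆ univ.filter P :=
    fun x hx => mem_filter.2 ⟨mem_univ x, (mem_filter.1 hx).2⟩
  have hle := Finset.card_le_card hsub
  have hpos := Finset.card_pos.2 ⟨q, mem_filter.2 ⟨hq, hPq⟩⟩
  omega

/-- Let `T` be a `v²×4` array whose columns `2,3,4` form a `VOA(U_{2,3}, v)`, whose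
column `1` is surjective onto `Fin t`, and such that under the uniform distribution
on rows the entropy function equals `a·r(Û^1_{2,5}) + b·r(U^{234}_{2,3})`.  With
`A_i` (resp. `B_i`) the set of values of column `2` (resp. `3`) co-occurring with
value `i` of column `1`: `|A_i| = |B_i|`; the subarray induced by `A_i, B_i` is a
`VOA(U_{2,3}, |A_i|)`; the sets `A_i × B_i` partition the alphabet square; and
`a = ½·H(|A_i|²/v² : i)`. -/
theorem statement15 (v t : ℕ) (hv : 1 ≤ v)
    (c1 : Fin (v ^ 2) → Fin t) (c : Fin (v ^ 2) → Fin 3 → Fin v)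
    (hVOA : IsVOA23 v c) (hsurj : Function.Surjective c1)
    (a b : ℝ)
    (hEnt : ∀ A : Finset (Fin 4),
      colEntropy (fun _ => ((v ^ 2 : ℕ) : ℝ)⁻¹) (mkT c1 c) A
        = a * rU25hat1 A + b * rU23_234 A) :
    (∀ i : Fin t, (valSet c1 c 0 i).card = (valSet c1 c 1 i).card) ∧
    (∀ i : Fin t,
      (Finset.univ.filter
          (fun r => c r 0 ∈ valSet c1 c 0 i ∧ c r 1 ∈ valSet c1 c 1 i)).card
        = (valSet c1 c 0 i).card ^ 2 ∧
      ∀ j k : Fin 3, j ≠ k → ∀ x y : Fin v,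
        x ∈ (Finset.univ.filter
              (fun r => c r 0 ∈ valSet c1 c 0 i ∧ c r 1 ∈ valSet c1 c 1 i)).image
                (fun r => c r j) →
        y ∈ (Finset.univ.filter
              (fun r => c r 0 ∈ valSet c1 c 0 i ∧ c r 1 ∈ valSet c1 c 1 i)).image
                (fun r => c r k) →
        ((Finset.univ.filter
            (fun r => c r 0 ∈ valSet c1 c 0 i ∧ c r 1 ∈ valSet c1 c 1 i)).filter
              (fun r => c r j = x ∧ c r k = y)).card = 1) ∧
    (∀ x y : Fin v, ∃! i : Fin t, x ∈ valSet c1 c 0 i ∧ y ∈ valSet c1 c 1 i) ∧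
    a = (2 : ℝ)⁻¹ * (-∑ i : Fin t,
        ((((valSet c1 c 0 i).card ^ 2 : ℕ) : ℝ) / ((v ^ 2 : ℕ) : ℝ)) *
          Real.log ((((valSet c1 c 0 i).card ^ 2 : ℕ) : ℝ) / ((v ^ 2 : ℕ) : ℝ))) := by
  classical
  have hv' : 0 < v := hv
  have hT0 : ∀ s, mkT c1 c s 0 = (c1 s : ℕ) := fun s => by rw [mkT, if_pos rfl]
  have hT1 : ∀ s, mkT c1 c s 1 = (c s 0 : ℕ) := fun s => by
    rw [mkT, if_neg (by decide)]; congr 1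
  have hT2 : ∀ s, mkT c1 c s 2 = (c s 1 : ℕ) := fun s => by
    rw [mkT, if_neg (by decide)]; congr 1
  have hT3 : ∀ s, mkT c1 c s 3 = (c s 2 : ℕ) := fun s => by
    rw [mkT, if_neg (by decide)]; congr 1
  have hu01 : ∀ r s : Fin (v ^ 2), c r 0 = c s 0 → c r 1 = c s 1 → r = s :=
    pair_unique (hVOA 0 1 (by decide))
  have hu02 : ∀ r s : Fin (v ^ 2), c r 0 = c s 0 → c r 2 = c s 2 → r = s :=
    pair_unique (hVOA 0 2 (by decide))
  have hu12 : ∀ r s : Fin (v ^ 2), c r 1 = c s 1 → c r 2 = c s 2 → r = s :=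
    pair_unique (hVOA 1 2 (by decide))
  -- rank value computations
  have e0 := hEnt {0}
  rw [show rU25hat1 {0} = 2 from by rw [rU25hat1]; norm_num,
    show rU23_234 {0} = 0 from by
      rw [rU23_234, show (({0} : Finset (Fin 4)) ∩ {1,2,3}).card = 0 from by decide]
      norm_num] at e0
  have e01 := hEnt {0, 1}
  rw [show rU25hat1 {0, 1} = 2 from by
      rw [rU25hat1, if_neg (by decide), show (({0,1} : Finset (Fin 4))).card = 2 from by decide]
      norm_num,
    show rU23_234 {0, 1} = 1 from by
      rw [rU23_234, show (({0,1} : Finset (Fin 4)) ∩ {1,2,3}).card = 1 from by decide]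
      norm_num] at e01
  have e02 := hEnt {0, 2}
  rw [show rU25hat1 {0, 2} = 2 from by
      rw [rU25hat1, if_neg (by decide), show (({0,2} : Finset (Fin 4))).card = 2 from by decide]
      norm_num,
    show rU23_234 {0, 2} = 1 from by
      rw [rU23_234, show (({0,2} : Finset (Fin 4)) ∩ {1,2,3}).card = 1 from by decide]
      norm_num] at e02
  have e03 := hEnt {0, 3}
  rw [show rU25hat1 {0, 3} = 2 from by
      rw [rU25hat1, if_neg (by decide), show (({0,3} : Finset (Fin 4))).card = 2 from by decide]
      norm_num,
    show rU23_234 {0, 3} = 1 from by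
      rw [rU23_234, show (({0,3} : Finset (Fin 4)) ∩ {1,2,3}).card = 1 from by decide]
      norm_num] at e03
  have e012 := hEnt {0, 1, 2}
  rw [show rU25hat1 {0, 1, 2} = 2 from by
      rw [rU25hat1, if_neg (by decide), show (({0,1,2} : Finset (Fin 4))).card = 3 from by decide]
      norm_num,
    show rU23_234 {0, 1, 2} = 2 from by
      rw [rU23_234, show (({0,1,2} : Finset (Fin 4)) ∩ {1,2,3}).card = 2 from by decide]
      norm_num] at e012
  have e013 := hEnt {0, 1, 3}
  rw [show rU25hat1 {0, 1, 3} = 2 from by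
      rw [rU25hat1, if_neg (by decide), show (({0,1,3} : Finset (Fin 4))).card = 3 from by decide]
      norm_num,
    show rU23_234 {0, 1, 3} = 2 from by
      rw [rU23_234, show (({0,1,3} : Finset (Fin 4)) ∩ {1,2,3}).card = 2 from by decide]
      norm_num] at e013
  have e023 := hEnt {0, 2, 3}
  rw [show rU25hat1 {0, 2, 3} = 2 from by
      rw [rU25hat1, if_neg (by decide), show (({0,2,3} : Finset (Fin 4))).card = 3 from by decide]
      norm_num,
    show rU23_234 {0, 2, 3} = 2 from by
      rw [rU23_234, show (({0,2,3} : Finset (Fin 4)) ∩ {1,2,3}).card = 2 from by decide]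
      norm_num] at e023
  -- the three entropy combinations
  have hc12 : colEntropy (fun _ => ((v ^ 2 : ℕ) : ℝ)⁻¹) (mkT c1 c) {0, 1}
      + colEntropy (fun _ => ((v ^ 2 : ℕ) : ℝ)⁻¹) (mkT c1 c) {0, 2}
      - colEntropy (fun _ => ((v ^ 2 : ℕ) : ℝ)⁻¹) (mkT c1 c) {0}
      - colEntropy (fun _ => ((v ^ 2 : ℕ) : ℝ)⁻¹) (mkT c1 c) {0, 1, 2} = 0 := by
    rw [e01, e02, e0, e012]; ring
  have hc13 : colEntropy (fun _ => ((v ^ 2 : ℕ) : ℝ)⁻¹) (mkT c1 c) {0, 1}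
      + colEntropy (fun _ => ((v ^ 2 : ℕ) : ℝ)⁻¹) (mkT c1 c) {0, 3}
      - colEntropy (fun _ => ((v ^ 2 : ℕ) : ℝ)⁻¹) (mkT c1 c) {0}
      - colEntropy (fun _ => ((v ^ 2 : ℕ) : ℝ)⁻¹) (mkT c1 c) {0, 1, 3} = 0 := by
    rw [e01, e03, e0, e013]; ring
  have hc23 : colEntropy (fun _ => ((v ^ 2 : ℕ) : ℝ)⁻¹) (mkT c1 c) {0, 2}
      + colEntropy (fun _ => ((v ^ 2 : ℕ) : ℝ)⁻¹) (mkT c1 c) {0, 3}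
      - colEntropy (fun _ => ((v ^ 2 : ℕ) : ℝ)⁻¹) (mkT c1 c) {0}
      - colEntropy (fun _ => ((v ^ 2 : ℕ) : ℝ)⁻¹) (mkT c1 c) {0, 2, 3} = 0 := by
    rw [e02, e03, e0, e023]; ring
  have key01 := keyA c1 (fun r => c r 0) (fun r => c r 1) hu01
    (combo hv' c1 c (mkT c1 c) hT0 0 1 1 2 hT1 hT2 (hVOA 0 1 (by decide)) hc12)
  have key02 := keyA c1 (fun r => c r 0) (fun r => c r 2) hu02
    (combo hv' c1 c (mkT c1 c) hT0 0 2 1 3 hT1 hT3 (hVOA 0 2 (by decide)) hc13)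
  have key12 := keyA c1 (fun r => c r 1) (fun r => c r 2) hu12
    (combo hv' c1 c (mkT c1 c) hT0 1 2 2 3 hT2 hT3 (hVOA 1 2 (by decide)) hc23)
  have rect01 := keyB c1 (fun r => c r 0) (fun r => c r 1) hu01 key01
  have rect02 := keyB c1 (fun r => c r 0) (fun r => c r 2) hu02 key02
  have rect12 := keyB c1 (fun r => c r 1) (fun r => c r 2) hu12 key12
  have prod01 := keyC c1 (fun r => c r 0) (fun r => c r 1) hu01 key01
  have prod02 := keyC c1 (fun r => c r 0) (fun r => c r 2) hu02 key02
  have prod12 := keyC c1 (fun r => c r 1) (fun r => c r 2) hu12 key12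
  have prod01' : ∀ i : Fin t, (valSet c1 c 0 i).card * (valSet c1 c 1 i).card
      = (univ.filter (fun s => c1 s = i)).card := by
    intro i; obtain ⟨r, rfl⟩ := hsurj i; exact prod01 r
  have prod02' : ∀ i : Fin t, (valSet c1 c 0 i).card * (valSet c1 c 2 i).card
      = (univ.filter (fun s => c1 s = i)).card := by
    intro i; obtain ⟨r, rfl⟩ := hsurj i; exact prod02 r
  have prod12' : ∀ i : Fin t, (valSet c1 c 1 i).card * (valSet c1 c 2 i).card
      = (univ.filter (fun s => c1 s = i)).card := by
    intro i; obtain ⟨r, rfl⟩ := hsurj i; exact prod12 r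
  have hGpos : ∀ i : Fin t, 0 < (univ.filter (fun s => c1 s = i)).card := by
    intro i; obtain ⟨r, rfl⟩ := hsurj i; exact Finset.card_pos.2 ⟨r, by simp⟩
  have hAB : ∀ i : Fin t, (valSet c1 c 0 i).card = (valSet c1 c 1 i).card := by
    intro i
    have h1 := prod01' i
    have h2 := prod02' i
    have h3 := prod12' i
    have hG := hGpos i
    have hA : 0 < (valSet c1 c 0 i).card := by
      rcases Nat.eq_zero_or_pos (valSet c1 c 0 i).card with h | h
      · rw [h, zero_mul] at h1; omega
      · exact h
    have hB : 0 < (valSet c1 c 1 i).card := by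
      rcases Nat.eq_zero_or_pos (valSet c1 c 1 i).card with h | h
      · rw [h, mul_zero] at h1; omega
      · exact h
    have hBC : (valSet c1 c 1 i).card = (valSet c1 c 2 i).card :=
      Nat.eq_of_mul_eq_mul_left hA (h1.trans h2.symm)
    have h1' : (valSet c1 c 1 i).card * (valSet c1 c 0 i).card
        = (univ.filter (fun s => c1 s = i)).card := by rw [mul_comm]; exact h1
    have hAC : (valSet c1 c 0 i).card = (valSet c1 c 2 i).card :=
      Nat.eq_of_mul_eq_mul_left hB (h1'.trans h3.symm)
    rw [hAC, hBC]
  have rect01' : ∀ i : Fin t, ∀ x ∈ valSet c1 c 0 i, ∀ y ∈ valSet c1 c 1 i,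
      ∃ q, c1 q = i ∧ c q 0 = x ∧ c q 1 = y := by
    intro i x hx y hy
    simp only [valSet, Finset.mem_image, Finset.mem_filter] at hx hy
    obtain ⟨r, hr, rfl⟩ := hx
    obtain ⟨s, hs, rfl⟩ := hy
    obtain ⟨q, hq1, hq2, hq3⟩ := rect01 r s (by rw [hr.2, hs.2])
    exact ⟨q, hq1.trans hr.2, hq2, hq3⟩
  have rect02' : ∀ i : Fin t, ∀ x ∈ valSet c1 c 0 i, ∀ y ∈ valSet c1 c 2 i,
      ∃ q, c1 q = i ∧ c q 0 = x ∧ c q 2 = y := by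
    intro i x hx y hy
    simp only [valSet, Finset.mem_image, Finset.mem_filter] at hx hy
    obtain ⟨r, hr, rfl⟩ := hx
    obtain ⟨s, hs, rfl⟩ := hy
    obtain ⟨q, hq1, hq2, hq3⟩ := rect02 r s (by rw [hr.2, hs.2])
    exact ⟨q, hq1.trans hr.2, hq2, hq3⟩
  have rect12' : ∀ i : Fin t, ∀ x ∈ valSet c1 c 1 i, ∀ y ∈ valSet c1 c 2 i,
      ∃ q, c1 q = i ∧ c q 1 = x ∧ c q 2 = y := by
    intro i x hx y hy
    simp only [valSet, Finset.mem_image, Finset.mem_filter] at hx hy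
    obtain ⟨r, hr, rfl⟩ := hx
    obtain ⟨s, hs, rfl⟩ := hy
    obtain ⟨q, hq1, hq2, hq3⟩ := rect12 r s (by rw [hr.2, hs.2])
    exact ⟨q, hq1.trans hr.2, hq2, hq3⟩
  have hFG : ∀ i : Fin t,
      univ.filter (fun r => c r 0 ∈ valSet c1 c 0 i ∧ c r 1 ∈ valSet c1 c 1 i)
        = univ.filter (fun s => c1 s = i) := by
    intro i
    apply Finset.Subset.antisymm
    · intro r hr
      obtain ⟨hx, hy⟩ := (mem_filter.1 hr).2
      obtain ⟨q, hq1, hq2, hq3⟩ := rect01' i _ hx _ hy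
      have hqr : q = r := hu01 q r hq2 hq3
      refine mem_filter.2 ⟨mem_univ r, ?_⟩
      rw [← hqr]; exact hq1
    · intro r hr
      have hri : c1 r = i := (mem_filter.1 hr).2
      refine mem_filter.2 ⟨mem_univ r, ?_, ?_⟩
      · simp only [valSet, Finset.mem_image]
        exact ⟨r, mem_filter.2 ⟨mem_univ r, hri⟩, rfl⟩
      · simp only [valSet, Finset.mem_image]
        exact ⟨r, mem_filter.2 ⟨mem_univ r, hri⟩, rfl⟩
  have hsq : ∀ i : Fin t, (univ.filter (fun s => c1 s = i)).card
      = (valSet c1 c 0 i).card ^ 2 := by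
    intro i
    have h1 := prod01' i
    rw [← hAB i] at h1
    rw [← h1, sq]
  refine ⟨hAB, ?_, ?_, ?_⟩
  · -- part 2
    intro i
    constructor
    · rw [hFG i]; exact hsq i
    · intro j k hjk x y hx hy
      rw [hFG i] at hx hy ⊢
      have hx' : x ∈ valSet c1 c j i := hx
      have hy' : y ∈ valSet c1 c k i := hy
      fin_cases j <;> fin_cases k
      · exact absurd rfl hjk
      · obtain ⟨q, hqi, hq1, hq2⟩ := rect01' i x hx' y hy'
        exact filter_card_one (mem_filter.2 ⟨mem_univ q, hqi⟩) ⟨hq1, hq2⟩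
          (hVOA 0 1 (by decide) x y)
      · obtain ⟨q, hqi, hq1, hq2⟩ := rect02' i x hx' y hy'
        exact filter_card_one (mem_filter.2 ⟨mem_univ q, hqi⟩) ⟨hq1, hq2⟩
          (hVOA 0 2 (by decide) x y)
      · obtain ⟨q, hqi, hq1, hq2⟩ := rect01' i y hy' x hx'
        exact filter_card_one (mem_filter.2 ⟨mem_univ q, hqi⟩) ⟨hq2, hq1⟩
          (hVOA 1 0 (by decide) x y)
      · exact absurd rfl hjk
      · obtain ⟨q, hqi, hq1, hq2⟩ := rect12' i x hx' y hy'
        exact filter_card_one (mem_filter.2 ⟨mem_univ q, hqi⟩) ⟨hq1, hq2⟩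
          (hVOA 1 2 (by decide) x y)
      · obtain ⟨q, hqi, hq1, hq2⟩ := rect02' i y hy' x hx'
        exact filter_card_one (mem_filter.2 ⟨mem_univ q, hqi⟩) ⟨hq2, hq1⟩
          (hVOA 2 0 (by decide) x y)
      · obtain ⟨q, hqi, hq1, hq2⟩ := rect12' i y hy' x hx'
        exact filter_card_one (mem_filter.2 ⟨mem_univ q, hqi⟩) ⟨hq2, hq1⟩
          (hVOA 2 1 (by decide) x y)
      · exact absurd rfl hjk
  · -- part 3
    intro x y
    have h1 := hVOA 0 1 (by decide) x y
    obtain ⟨r, hr⟩ := Finset.card_pos.1 (by rw [h1]; norm_num)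
    obtain ⟨hrx, hry⟩ := (Finset.mem_filter.1 hr).2
    refine ⟨c1 r, ⟨?_, ?_⟩, ?_⟩
    · simp only [valSet, Finset.mem_image]
      exact ⟨r, mem_filter.2 ⟨mem_univ r, rfl⟩, hrx⟩
    · simp only [valSet, Finset.mem_image]
      exact ⟨r, mem_filter.2 ⟨mem_univ r, rfl⟩, hry⟩
    · rintro i ⟨hx, hy⟩
      obtain ⟨q, hqi, hq1, hq2⟩ := rect01' i x hx y hy
      have hqr : q = r := hu01 q r (hq1.trans hrx.symm) (hq2.trans hry.symm)
      rw [← hqi, hqr]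
  · -- part 4
    have hfn : ∀ r : Fin (v ^ 2),
        (univ.filter (fun s => ∀ i ∈ ({0} : Finset (Fin 4)), mkT c1 c s i = mkT c1 c r i))
          = univ.filter (fun s => c1 s = c1 r) := by
      intro r; apply Finset.filter_congr; intro s _
      simp only [Finset.mem_singleton, forall_eq, hT0, eq_iff_iff]
      exact Fin.val_inj
    have hE : colEntropy (fun _ => ((v ^ 2 : ℕ) : ℝ)⁻¹) (mkT c1 c) {0}
        = -∑ r : Fin (v ^ 2), ((v ^ 2 : ℕ) : ℝ)⁻¹ *
            Real.log (((univ.filter (fun s => c1 s = c1 r)).card : ℝ) * ((v ^ 2 : ℕ) : ℝ)⁻¹) := by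
      rw [colEntropy_count]
      congr 1
      exact Finset.sum_congr rfl (fun r _ => by rw [hfn r])
    have hfib : ∑ r : Fin (v ^ 2), ((v ^ 2 : ℕ) : ℝ)⁻¹ *
            Real.log (((univ.filter (fun s => c1 s = c1 r)).card : ℝ) * ((v ^ 2 : ℕ) : ℝ)⁻¹)
        = ∑ i : Fin t, ((univ.filter (fun s => c1 s = i)).card : ℝ) *
            (((v ^ 2 : ℕ) : ℝ)⁻¹ *
              Real.log (((univ.filter (fun s => c1 s = i)).card : ℝ) * ((v ^ 2 : ℕ) : ℝ)⁻¹)) := by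
      rw [← Finset.sum_fiberwise_of_maps_to (g := c1) (t := univ)
        (fun r _ => mem_univ (c1 r))]
      apply Finset.sum_congr rfl
      intro i _
      have hcg : ∀ r ∈ univ.filter (fun s => c1 s = i),
          ((v ^ 2 : ℕ) : ℝ)⁻¹ *
              Real.log (((univ.filter (fun s => c1 s = c1 r)).card : ℝ) * ((v ^ 2 : ℕ) : ℝ)⁻¹)
          = ((v ^ 2 : ℕ) : ℝ)⁻¹ *
              Real.log (((univ.filter (fun s => c1 s = i)).card : ℝ) * ((v ^ 2 : ℕ) : ℝ)⁻¹) := by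
        intro r hr
        rw [(mem_filter.1 hr).2]
      rw [Finset.sum_congr rfl hcg, Finset.sum_const, nsmul_eq_mul]
    have hfinal : ∑ i : Fin t, ((univ.filter (fun s => c1 s = i)).card : ℝ) *
            (((v ^ 2 : ℕ) : ℝ)⁻¹ *
              Real.log (((univ.filter (fun s => c1 s = i)).card : ℝ) * ((v ^ 2 : ℕ) : ℝ)⁻¹))
        = ∑ i : Fin t, ((((valSet c1 c 0 i).card ^ 2 : ℕ) : ℝ) / ((v ^ 2 : ℕ) : ℝ)) *
            Real.log ((((valSet c1 c 0 i).card ^ 2 : ℕ) : ℝ) / ((v ^ 2 : ℕ) : ℝ)) := by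
      apply Finset.sum_congr rfl
      intro i _
      rw [hsq i, div_eq_mul_inv]
      ring
    rw [hfib, hfinal] at hE
    rw [hE] at e0
    linarith [e0]
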